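/- Define the linear map μ on the space of real arrays (X^i_{jk}) (i, j, k ∈ {1,2}) symmetric in j, k by μ(X)^i_{jk} = (1/3)(δ^i_j Σ_r X^r_{kr} + δ^i_k Σ_r X^r_{jr}), where δ is the Kronecker symbol. Then μ is a projection onto g²: the image of μ equals g², the restriction of μ to g² is the identity, and consequently μ ∘ μ = μ. -/
import Mathlib


/- STATEMENT 10: the map μ(X)^i_{jk} = (1/3)(δ^i_j Σ_r X^r_{kr} + δ^i_k Σ_r X^r_{jr}) is a
   projection of the space of symmetric arrays onto g². -/

/-- The space g² of arrays (X^i_{jk}), symmetric in the lower indices, satisfying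
X²₁₁ = 0, X¹₁₁ − 2X²₁₂ = 0, 2X¹₁₂ − X²₂₂ = 0, X¹₂₂ = 0.
(Index value `0` stands for `1`, index value `1` stands for `2`.) -/
def g2 : Submodule ℝ (Fin 2 → Fin 2 → Fin 2 → ℝ) where
  carrier := {X | (∀ i j k, X i j k = X i k j) ∧
    X 1 0 0 = 0 ∧ X 0 0 0 - 2 * X 1 0 1 = 0 ∧ 2 * X 0 0 1 - X 1 1 1 = 0 ∧ X 0 1 1 = 0}
  add_mem' := by
    rintro X Y ⟨hs, h1, h2, h3, h4⟩ ⟨hs', h1', h2', h3', h4'⟩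
    refine ⟨fun i j k => ?_, ?_, ?_, ?_, ?_⟩ <;>
      simp only [Pi.add_apply] <;>
      first
        | rw [hs i j k, hs' i j k]
        | linarith
  zero_mem' := ⟨fun i j k => rfl, by norm_num, by norm_num, by norm_num, by norm_num⟩
  smul_mem' := by
    rintro c X ⟨hs, h1, h2, h3, h4⟩
    refine ⟨fun i j k => ?_, ?_, ?_, ?_, ?_⟩ <;>
      simp only [Pi.smul_apply, smul_eq_mul] <;>
      first
        | rw [hs i j k]
        | linear_combination c * h1
        | linear_combination c * h2
        | linear_combination c * h3
        | linear_combination c * h4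

/-- μ(X)^i_{jk} = (1/3)(δ^i_j Σ_r X^r_{kr} + δ^i_k Σ_r X^r_{jr}). -/
noncomputable def mu (X : Fin 2 → Fin 2 → Fin 2 → ℝ) : Fin 2 → Fin 2 → Fin 2 → ℝ :=
  fun i j k =>
    (1 / 3) * ((if i = j then (1 : ℝ) else 0) * ∑ r, X r k r
      + (if i = k then (1 : ℝ) else 0) * ∑ r, X r j r)


lemma mu_mem_g2 (X : Fin 2 → Fin 2 → Fin 2 → ℝ) (hs : ∀ i j k, X i j k = X i k j) :
    mu X ∈ g2 := by
  refine ⟨fun i j k => by simp [mu]; ring, ?_, ?_, ?_, ?_⟩ <;>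
    simp [mu, Fin.sum_univ_two] <;> linarith [hs 0 1 0, hs 1 1 0, hs 0 0 1, hs 1 0 1]

lemma mu_id_g2 (X : Fin 2 → Fin 2 → Fin 2 → ℝ) (hX : X ∈ g2) : mu X = X := by
  obtain ⟨hs, h1, h2, h3, h4⟩ := hX
  funext i j k
  fin_cases i <;> fin_cases j <;> fin_cases k <;>
    simp [mu, Fin.sum_univ_two] <;>
    linarith [hs 0 1 0, hs 1 1 0, hs 0 0 1, hs 1 0 1, h1, h2, h3, h4]

/-- μ maps the symmetric arrays into g², its image is all of g², it restricts to the
identity on g², and consequently μ ∘ μ = μ on symmetric arrays. -/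
theorem stmt10 :
    (∀ X : Fin 2 → Fin 2 → Fin 2 → ℝ, (∀ i j k, X i j k = X i k j) → mu X ∈ g2) ∧
    (∀ Y ∈ g2, ∃ X : Fin 2 → Fin 2 → Fin 2 → ℝ,
      (∀ i j k, X i j k = X i k j) ∧ mu X = Y) ∧
    (∀ X ∈ g2, mu X = X) ∧
    (∀ X : Fin 2 → Fin 2 → Fin 2 → ℝ, (∀ i j k, X i j k = X i k j) →
      mu (mu X) = mu X) := by
  refine ⟨mu_mem_g2, fun Y hY => ⟨Y, hY.1, mu_id_g2 Y hY⟩, mu_id_g2, fun X hs => ?_⟩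
  exact mu_id_g2 (mu X) (mu_mem_g2 X hs)
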